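/- Pawlikowska's theorem without boundary condition: Let n be a positive integer and let f : ℝ → ℝ be n-times differentiable at every point of the closed interval [a,b] (with a < b). Then there exists a point η ∈ (a,b) such that f(a) = T_n(f,η)(a) + ((a-η)^{n+1}/(n+1)!) · (f^{(n)}(b) - f^{(n)}(a))/(b - a). -/

import Mathlib

open Set Filter Asymptotics
open scoped Topology Nat

private lemma iter_comp {a b : ℝ} (hab : a < b) (f : ℝ → ℝ) (i j : ℕ) :
    ∀ x ∈ Set.Icc a b, iteratedDerivWithin j (iteratedDerivWithin i f (Set.Icc a b)) (Set.Icc a b) x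
      = iteratedDerivWithin (i + j) f (Set.Icc a b) x := by
  induction j with
  | zero => intro x hx; simp
  | succ j ih =>
    intro x hx
    rw [iteratedDerivWithin_succ, ← Nat.add_assoc,
      iteratedDerivWithin_succ]
    exact derivWithin_congr (fun y hy => ih y hy) (ih x hx)

private lemma peano {a b : ℝ} (hab : a < b) : ∀ (m : ℕ), 1 ≤ m → ∀ (g : ℝ → ℝ),
    (∀ k < m, ∀ x ∈ Set.Icc a b,
      DifferentiableWithinAt ℝ (iteratedDerivWithin k g (Set.Icc a b)) (Set.Icc a b) x) →
    (fun x => g x - ∑ j ∈ Finset.range (m+1),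
        iteratedDerivWithin j g (Set.Icc a b) a * (x - a)^j / (j.factorial : ℝ))
      =o[𝓝[Set.Icc a b] a] fun x => (x - a)^m := by
  have ha : a ∈ Set.Icc a b := Set.left_mem_Icc.mpr hab.le
  have uD := uniqueDiffOn_Icc hab
  intro m hm
  induction m, hm using Nat.le_induction with
  | base =>
    intro g hg
    have h0 : DifferentiableWithinAt ℝ g (Set.Icc a b) a := by
      simpa [iteratedDerivWithin_zero] using hg 0 one_pos a ha
    have h1 := h0.hasDerivWithinAt
    rw [hasDerivWithinAt_iff_isLittleO] at h1
    have : (fun x => g x - ∑ j ∈ Finset.range 2,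
        iteratedDerivWithin j g (Set.Icc a b) a * (x - a)^j / (j.factorial : ℝ))
        = fun x => g x - g a - (x - a) • derivWithin g (Set.Icc a b) a := by
      funext x
      rw [Finset.sum_range_succ, Finset.sum_range_one]
      simp [iteratedDerivWithin_one]
      ring
    rw [this]
    simpa using h1
  | succ m hm ih =>
    intro g hg
    set s := Set.Icc a b with hs
    set g' := derivWithin g s with hgdef
    have hg'cond : ∀ k < m, ∀ x ∈ s, DifferentiableWithinAt ℝ (iteratedDerivWithin k g' s) s x := by
      intro k hk x hx
      exact (hg (k+1) (by omega) x hx).congr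
        (fun y hy => (congrFun (iteratedDerivWithin_succ' (n := k) (f := g) (s := s)) y).symm)
        ((congrFun (iteratedDerivWithin_succ' (n := k) (f := g) (s := s)) x).symm)
    set S := fun t => g' t - ∑ j ∈ Finset.range (m+1),
        iteratedDerivWithin j g' s a * (t - a)^j / (j.factorial : ℝ) with hSdef
    have hS : S =o[𝓝[s] a] fun t => (t - a)^m := ih g' hg'cond
    set c := fun j => iteratedDerivWithin j g s a with hcdef
    set R := fun x => g x - ∑ j ∈ Finset.range (m+1+1),
        c j * (x - a)^j / (j.factorial : ℝ) with hRdef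
    have hgdiff : ∀ t ∈ s, HasDerivWithinAt g (g' t) s t := by
      intro t ht
      have : DifferentiableWithinAt ℝ g s t := by
        simpa [iteratedDerivWithin_zero] using hg 0 (by omega) t ht
      exact this.hasDerivWithinAt
    have hsum : ∀ t : ℝ, ∑ j ∈ Finset.range (m+2), c j * ((j : ℝ) * (t-a)^(j-1)) / (j.factorial : ℝ)
        = ∑ j ∈ Finset.range (m+1), iteratedDerivWithin j g' s a * (t - a)^j / (j.factorial : ℝ) := by
      intro t
      rw [Finset.sum_range_succ']
      simp only [Nat.cast_zero, zero_mul, mul_zero, zero_div, add_zero]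
      apply Finset.sum_congr rfl
      intro j hj
      rw [← iteratedDerivWithin_succ']
      have hfac : ((j+1).factorial : ℝ) = (j+1) * (j.factorial : ℝ) := by
        rw [Nat.factorial_succ]; push_cast; ring
      rw [hfac]
      simp only [hcdef, Nat.add_sub_cancel]
      push_cast
      have h1 : ((j:ℝ)+1) ≠ 0 := by positivity
      have h2 : (j.factorial : ℝ) ≠ 0 := Nat.cast_ne_zero.mpr j.factorial_ne_zero
      field_simp
    have hR' : ∀ t ∈ s, HasDerivWithinAt R (S t) s t := by
      intro t ht
      have hpoly : HasDerivAt (fun x => ∑ j ∈ Finset.range (m+2), c j * (x - a)^j / (j.factorial : ℝ))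
          (∑ j ∈ Finset.range (m+2), c j * ((j : ℝ) * (t-a)^(j-1)) / (j.factorial : ℝ)) t := by
        apply HasDerivAt.fun_sum
        intro j hj
        have : HasDerivAt (fun x => (x - a)^j) ((j : ℝ) * (t-a)^(j-1) * 1) t :=
          ((hasDerivAt_id t).sub_const a).pow j
        simpa using (this.const_mul (c j)).div_const _
      have := (hgdiff t ht).fun_sub ((hpoly.hasDerivWithinAt).congr_deriv (hsum t))
      simpa [hRdef, hSdef] using this
    have hRa : R a = 0 := by
      have : ∀ j ∈ Finset.range (m+2), c j * (a - a)^j / (j.factorial : ℝ)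
          = if j = 0 then g a else 0 := by
        intro j hj
        rcases Nat.eq_zero_or_pos j with h | h
        · subst h; simp [hcdef, iteratedDerivWithin_zero]
        · rw [if_neg (by omega)]; simp [zero_pow (by omega : j ≠ 0)]
      simp only [hRdef, Finset.sum_congr rfl this, Finset.sum_ite_eq']
      simp
    rw [isLittleO_iff]
    intro ε hε
    have hev := (isLittleO_iff.mp hS) hε
    rw [eventually_nhdsWithin_iff, Metric.eventually_nhds_iff] at hev
    obtain ⟨δ, hδpos, hδ⟩ := hev
    rw [eventually_nhdsWithin_iff, Metric.eventually_nhds_iff]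
    refine ⟨δ, hδpos, fun x hxd hxs => ?_⟩
    have hax : a ≤ x := hxs.1
    have hsub : Set.Icc a x ⊆ s := Set.Icc_subset_Icc_right hxs.2
    have hbound : ∀ t ∈ Set.Icc a x, ‖S t‖ ≤ ε * (x - a)^m := by
      intro t ht
      have hts : t ∈ s := hsub ht
      have htd : dist t a < δ := by
        rw [Real.dist_eq, abs_of_nonneg (sub_nonneg.mpr ht.1)]
        calc t - a ≤ x - a := by linarith [ht.2]
        _ < δ := by rw [Real.dist_eq, abs_of_nonneg (sub_nonneg.mpr hax)] at hxd; exact hxd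
      have := hδ htd hts
      calc ‖S t‖ ≤ ε * ‖(t - a)^m‖ := this
        _ = ε * (t-a)^m := by
            rw [Real.norm_eq_abs, abs_of_nonneg (pow_nonneg (sub_nonneg.mpr ht.1) m)]
        _ ≤ ε * (x-a)^m := by
            apply mul_le_mul_of_nonneg_left _ hε.le
            exact pow_le_pow_left₀ (sub_nonneg.mpr ht.1) (by linarith [ht.2]) m
    have key := Convex.norm_image_sub_le_of_norm_hasDerivWithin_le
      (f := R) (f' := S) (fun t ht => (hR' t (hsub ht)).mono hsub) hbound
      (convex_Icc a x) (Set.left_mem_Icc.mpr hax) (Set.right_mem_Icc.mpr hax)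
    rw [hRa, sub_zero] at key
    calc ‖R x‖ ≤ ε * (x-a)^m * ‖x - a‖ := key
      _ = ε * ‖(x - a)^(m+1)‖ := by
          rw [Real.norm_eq_abs, Real.norm_eq_abs, abs_of_nonneg (sub_nonneg.mpr hax),
            abs_of_nonneg (pow_nonneg (sub_nonneg.mpr hax) (m+1))]
          ring


private lemma tri_swap (F : ℕ → ℕ → ℝ) (n : ℕ) :
    ∑ i ∈ Finset.range (n+1), ∑ j ∈ Finset.range (n+1-i), F i j
      = ∑ k ∈ Finset.range (n+1), ∑ i ∈ Finset.range (k+1), F i (k-i) := by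
  induction n with
  | zero => simp
  | succ n ih =>
    rw [Finset.sum_range_succ (fun k => ∑ i ∈ Finset.range (k+1), F i (k-i))]
    rw [← ih]
    rw [Finset.sum_range_succ (fun i => ∑ j ∈ Finset.range (n+1+1-i), F i j)]
    have h1 : ∀ i ∈ Finset.range (n+1), ∑ j ∈ Finset.range (n+1+1-i), F i j
        = (∑ j ∈ Finset.range (n+1-i), F i j) + F i (n+1-i) := by
      intro i hi
      have hi' : i ≤ n := by simpa [Nat.lt_succ_iff] using hi
      have : n+1+1-i = (n+1-i)+1 := by omega
      rw [this, Finset.sum_range_succ]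
    rw [Finset.sum_congr rfl h1, Finset.sum_add_distrib]
    have h2 : ∑ i ∈ Finset.range (n+1+1), F i (n+1-i)
        = (∑ i ∈ Finset.range (n+1), F i (n+1-i)) + F (n+1) 0 := by
      rw [Finset.sum_range_succ]
      congr 1
      congr 1
      omega
    rw [h2]
    rw [show n+1+1-(n+1) = 1 by omega, Finset.sum_range_one]
    ring

private lemma inner_id (c : ℕ → ℝ) (u : ℝ) (k : ℕ) :
    ∑ i ∈ Finset.range (k+1), c k * (-u)^i / (i ! : ℝ) * (u^(k-i) / ((k-i)! : ℝ))
      = c k * (0:ℝ)^k / (k ! : ℝ) := by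
  have hadd := add_pow (-u) u k
  rw [neg_add_cancel] at hadd
  rw [hadd, Finset.mul_sum, Finset.sum_div]
  apply Finset.sum_congr rfl
  intro i hi
  have hik : i ≤ k := by simpa [Nat.lt_succ_iff] using hi
  have hfac : ((k.choose i : ℝ)) * (i ! : ℝ) * ((k-i)! : ℝ) = (k ! : ℝ) := by
    exact_mod_cast congrArg (Nat.cast : ℕ → ℝ) (Nat.choose_mul_factorial_mul_factorial hik)
  have h1 : (i ! : ℝ) ≠ 0 := Nat.cast_ne_zero.mpr i.factorial_ne_zero
  have h2 : ((k-i)! : ℝ) ≠ 0 := Nat.cast_ne_zero.mpr (k-i).factorial_ne_zero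
  have h3 : (k ! : ℝ) ≠ 0 := Nat.cast_ne_zero.mpr k.factorial_ne_zero
  field_simp
  rw [← hfac]
  ring

private lemma keyid (c : ℕ → ℝ) (n : ℕ) (hn : 1 ≤ n) (u : ℝ) :
    ∑ i ∈ Finset.range n, (-u)^i / (i ! : ℝ) * (∑ j ∈ Finset.range (n - i + 1), c (i+j) * u^j / (j ! : ℝ))
      = c 0 - c n * (-u)^n / (n ! : ℝ) := by
  have step1 : ∑ i ∈ Finset.range (n+1), (-u)^i / (i ! : ℝ) *
      (∑ j ∈ Finset.range (n + 1 - i), c (i+j) * u^j / (j ! : ℝ)) = c 0 := by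
    have := tri_swap (fun i j => (-u)^i / (i ! : ℝ) * (c (i+j) * u^j / (j ! : ℝ))) n
    rw [Finset.sum_congr rfl (fun i _ => Finset.mul_sum _ _ _), this]
    have h2 : ∀ k ∈ Finset.range (n+1), ∑ i ∈ Finset.range (k+1),
        (-u)^i / (i ! : ℝ) * (c (i + (k-i)) * u^(k-i) / ((k-i)! : ℝ))
        = c k * (0:ℝ)^k / (k ! : ℝ) := by
      intro k hk
      rw [← inner_id c u k]
      apply Finset.sum_congr rfl
      intro i hi
      have hik : i ≤ k := by simpa [Nat.lt_succ_iff] using hi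
      rw [Nat.add_sub_cancel' hik]
      ring
    rw [Finset.sum_congr rfl h2]
    rw [Finset.sum_eq_single 0]
    · simp
    · intro j hj hj0; simp [zero_pow hj0]
    · simp
  have step2 : ∑ i ∈ Finset.range (n+1), (-u)^i / (i ! : ℝ) *
      (∑ j ∈ Finset.range (n + 1 - i), c (i+j) * u^j / (j ! : ℝ))
      = (∑ i ∈ Finset.range n, (-u)^i / (i ! : ℝ) * (∑ j ∈ Finset.range (n - i + 1), c (i+j) * u^j / (j ! : ℝ)))
        + c n * (-u)^n / (n ! : ℝ) := by
    rw [Finset.sum_range_succ]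
    congr 1
    · apply Finset.sum_congr rfl
      intro i hi
      have : n + 1 - i = n - i + 1 := by
        have : i ≤ n := (Finset.mem_range.mp hi).le
        omega
      rw [this]
    · have : n + 1 - n = 1 := by omega
      rw [this]
      simp
      ring
  rw [step1] at step2
  linarith [step2]

private lemma varying {a b : ℝ} (hab : a < b) (f : ℝ → ℝ) (n : ℕ) (hn : 1 ≤ n)
    (hf : ∀ i < n, ∀ x ∈ Set.Icc a b,
      DifferentiableWithinAt ℝ (iteratedDerivWithin i f (Set.Icc a b)) (Set.Icc a b) x) :
    (fun x => f a - (∑ i ∈ Finset.range n,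
        iteratedDerivWithin i f (Set.Icc a b) x * (a - x)^i / (i ! : ℝ))
      - iteratedDerivWithin n f (Set.Icc a b) a * (a - x)^n / (n ! : ℝ))
      =o[𝓝[Set.Icc a b] a] fun x => (x - a)^n := by
  have ha : a ∈ Set.Icc a b := Set.left_mem_Icc.mpr hab.le
  set s := Set.Icc a b with hs
  set D := fun i x => iteratedDerivWithin i f s x with hD
  set R := fun (i : ℕ) (x : ℝ) => D i x - ∑ j ∈ Finset.range (n-i+1),
      D (i+j) a * (x-a)^j / (j ! : ℝ) with hR
  have hRo : ∀ i, i < n → (fun x => R i x) =o[𝓝[s] a] fun x => (x-a)^(n-i) := by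
    intro i hi
    have cond : ∀ k < n - i, ∀ x ∈ s,
        DifferentiableWithinAt ℝ (iteratedDerivWithin k (iteratedDerivWithin i f s) s) s x := by
      intro k hk x hx
      exact (hf (i+k) (by omega) x hx).congr
        (fun y hy => iter_comp hab f i k y hy) (iter_comp hab f i k x hx)
    have hp := peano hab (n-i) (by omega) (iteratedDerivWithin i f s) cond
    have heq : (fun x => iteratedDerivWithin i f s x - ∑ j ∈ Finset.range (n-i+1),
        iteratedDerivWithin j (iteratedDerivWithin i f s) s a * (x - a)^j / (j ! : ℝ))
        = fun x => R i x := by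
      funext x
      rw [hR]
      simp only [hD]
      congr 1
      apply Finset.sum_congr rfl
      intro j hj
      rw [iter_comp hab f i j a ha]
    rwa [heq] at hp
  have hmain : (fun x => f a - (∑ i ∈ Finset.range n, D i x * (a - x)^i / (i ! : ℝ))
      - D n a * (a - x)^n / (n ! : ℝ))
      = fun x => -(∑ i ∈ Finset.range n, ((a-x)^i / (i ! : ℝ)) * R i x) := by
    funext x
    have hkey := keyid (fun k => D k a) n hn (x - a)
    rw [show (-(x-a)) = a - x by ring] at hkey
    have h0 : D 0 a = f a := by simp [hD, iteratedDerivWithin_zero]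
    rw [h0] at hkey
    have hsplit : ∑ i ∈ Finset.range n, ((a-x)^i / (i ! : ℝ)) * R i x
        = (∑ i ∈ Finset.range n, ((a-x)^i / (i ! : ℝ)) * D i x)
          - ∑ i ∈ Finset.range n, (a-x)^i / (i ! : ℝ) *
              (∑ j ∈ Finset.range (n-i+1), D (i+j) a * (x-a)^j / (j ! : ℝ)) := by
      rw [← Finset.sum_sub_distrib]
      apply Finset.sum_congr rfl
      intro i hi
      rw [hR]
      ring
    rw [hsplit, hkey]
    have : ∑ i ∈ Finset.range n, ((a-x)^i / (i ! : ℝ)) * D i x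
        = ∑ i ∈ Finset.range n, D i x * (a - x)^i / (i ! : ℝ) := by
      apply Finset.sum_congr rfl; intro i hi; ring
    rw [this]
    ring
  rw [hmain]
  apply Asymptotics.IsLittleO.neg_left
  apply Asymptotics.IsLittleO.fun_sum
  intro i hi
  have hi' : i < n := Finset.mem_range.mp hi
  have hbig : (fun x : ℝ => (a-x)^i / (i ! : ℝ)) =O[𝓝[s] a] fun x => (x-a)^i := by
    rw [Asymptotics.isBigO_iff]
    refine ⟨1 / (i ! : ℝ), Filter.Eventually.of_forall fun x => ?_⟩
    rw [Real.norm_eq_abs, Real.norm_eq_abs, abs_div, abs_pow, abs_pow, abs_sub_comm a x]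
    rw [Nat.abs_cast]
    rw [div_eq_mul_inv, mul_comm, one_div]
  have := hbig.mul_isLittleO (hRo i hi')
  have hpow : (fun x : ℝ => (x-a)^i * (x-a)^(n-i)) = fun x => (x-a)^n := by
    funext x
    rw [← pow_add, Nat.add_sub_cancel' hi'.le]
  rwa [hpow] at this


private lemma flett_max {a b v K : ℝ} (hab : a < b) (g G : ℝ → ℝ)
    (hcont : ContinuousOn g (Set.Icc a b)) (hga : g a = v)
    (hint : ∀ x ∈ Set.Ioo a b, HasDerivAt g (G x) x)
    (hderb : HasDerivWithinAt g (G b) (Set.Icc a b) b)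
    (hK : 0 < K) (hGb : G b = -K * (g b - v)) (hvb : v < g b) :
    ∃ c ∈ Set.Ioo a b, G c = 0 := by
  have hGbneg : G b < 0 := by rw [hGb]; nlinarith
  have hslope := hasDerivWithinAt_iff_tendsto_slope.mp hderb
  have ev1 : ∀ᶠ x in 𝓝[Set.Icc a b \ {b}] b, slope g b x < 0 :=
    hslope.eventually_lt_const hGbneg
  have ev2 : ∀ᶠ x in 𝓝[Set.Icc a b \ {b}] b, a < x :=
    mem_nhdsWithin_of_mem_nhds (isOpen_Ioi.mem_nhds hab)
  have ev3 : ∀ᶠ x in 𝓝[Set.Icc a b \ {b}] b, x ∈ Set.Icc a b \ {b} :=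
    self_mem_nhdsWithin
  haveI hne : (𝓝[Set.Icc a b \ {b}] b).NeBot := by
    have h1 : (𝓝[Set.Ico a b] b).NeBot := by
      rw [← mem_closure_iff_nhdsWithin_neBot, closure_Ico hab.ne]
      exact Set.right_mem_Icc.mpr hab.le
    exact h1.mono (nhdsWithin_mono b (fun x hx => ⟨⟨hx.1, hx.2.le⟩, hx.2.ne⟩))
  obtain ⟨x₀, hsl, hx₀a, hx₀mem⟩ := (ev1.and (ev2.and ev3)).exists
  have hx₀b : x₀ < b := lt_of_le_of_ne hx₀mem.1.2 (fun h => hx₀mem.2 h)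
  rw [slope_def_field] at hsl
  have hgx₀ : g b < g x₀ := by
    rcases div_neg_iff.mp hsl with ⟨h1, h2⟩ | ⟨h1, h2⟩
    · linarith
    · linarith
  obtain ⟨c, hcs, hcmax⟩ := isCompact_Icc.exists_isMaxOn (Set.nonempty_Icc.mpr hab.le) hcont
  have hmax := isMaxOn_iff.mp hcmax
  have hcx₀ : g x₀ ≤ g c := hmax x₀ hx₀mem.1
  have hca : c ≠ a := by intro h; rw [h, hga] at hcx₀; linarith
  have hcb : c ≠ b := by intro h; rw [h] at hcx₀; linarith
  have hcoo : c ∈ Set.Ioo a b := ⟨lt_of_le_of_ne hcs.1 (Ne.symm hca), lt_of_le_of_ne hcs.2 hcb⟩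
  exact ⟨c, hcoo, (hcmax.isLocalMax (Icc_mem_nhds hcoo.1 hcoo.2)).hasDerivAt_eq_zero
    (hint c hcoo)⟩

private lemma flett_zero {a b v K : ℝ} (hab : a < b) (g G : ℝ → ℝ)
    (hcont : ContinuousOn g (Set.Icc a b)) (hga : g a = v)
    (hint : ∀ x ∈ Set.Ioo a b, HasDerivAt g (G x) x)
    (hderb : HasDerivWithinAt g (G b) (Set.Icc a b) b)
    (hK : 0 < K) (hGb : G b = -K * (g b - v)) :
    ∃ c ∈ Set.Ioo a b, G c = 0 := by
  rcases lt_trichotomy (g b) v with h | h | h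
  · have := flett_max (v := -v) hab (fun x => -g x) (fun x => -G x) (hcont.neg)
      (show -g a = -v by rw [hga]) (fun x hx => (hint x hx).neg) (hderb.neg) hK
      (show -G b = -K * (-g b - -v) by rw [hGb]; ring) (by simpa using h)
    obtain ⟨c, hc, hc0⟩ := this
    have hc0' : -G c = 0 := hc0
    exact ⟨c, hc, by linarith⟩
  · obtain ⟨c, hc, hc0⟩ := exists_hasDerivAt_eq_zero hab hcont (by rw [hga, h]) hint
    exact ⟨c, hc, hc0⟩
  · exact flett_max hab g G hcont hga hint hderb hK hGb h


private lemma hasDerivN {a b : ℝ} (hab : a < b) (f : ℝ → ℝ) (m : ℕ)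
    (hf : ∀ i < m + 1, ∀ x ∈ Set.Icc a b,
      DifferentiableWithinAt ℝ (iteratedDerivWithin i f (Set.Icc a b)) (Set.Icc a b) x)
    (c : ℝ) :
    ∀ x ∈ Set.Icc a b, HasDerivWithinAt
      (fun y => f a - (∑ i ∈ Finset.range (m+1),
          iteratedDerivWithin i f (Set.Icc a b) y * (a - y)^i / (i ! : ℝ))
        + c * (a - y)^(m+2) / ((m+2)! : ℝ))
      (-(iteratedDerivWithin (m+1) f (Set.Icc a b) x * (a - x)^m * (m+1) / ((m+1)! : ℝ))
        - c * (m+2) * (a - x)^(m+1) / ((m+2)! : ℝ)) (Set.Icc a b) x := by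
  intro x hx
  have uD := uniqueDiffOn_Icc hab
  set s := Set.Icc a b with hs
  set w := fun (j:ℕ) => (j:ℝ) * iteratedDerivWithin j f s x * (a-x)^(j-1) / (j ! : ℝ) with hw
  have hterm : ∀ i ∈ Finset.range (m+1), HasDerivWithinAt
      (fun y => iteratedDerivWithin i f s y * (a - y)^i / (i ! : ℝ))
      (w (i+1) - w i) s x := by
    intro i hi
    have hi' : i < m + 1 := Finset.mem_range.mp hi
    have hDi : HasDerivWithinAt (iteratedDerivWithin i f s)
        (iteratedDerivWithin (i+1) f s x) s x := by
      have h := (hf i hi' x hx).hasDerivWithinAt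
      rwa [← iteratedDerivWithin_succ] at h
    have hpow : HasDerivAt (fun y : ℝ => (a - y)^i) ((i:ℝ) * (a-x)^(i-1) * (0-1)) x :=
      ((hasDerivAt_const x a).sub (hasDerivAt_id x)).pow i
    have hmul := (hDi.fun_mul hpow.hasDerivWithinAt).div_const ((i ! : ℝ))
    refine hmul.congr_deriv (Eq.symm ?_)
    rw [hw]
    simp only [Nat.add_sub_cancel]
    rcases Nat.eq_zero_or_pos i with h0 | h0
    · subst h0; simp
    · have hfac : ((i+1)! : ℝ) = (i+1) * (i ! : ℝ) := by
        rw [Nat.factorial_succ]; push_cast; ring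
      have h2 : (i ! : ℝ) ≠ 0 := Nat.cast_ne_zero.mpr i.factorial_ne_zero
      have hip : (a-x)^i = (a-x)^(i-1) * (a-x) := by
        conv_lhs => rw [show i = (i-1)+1 by omega]
        rw [pow_succ]
      rw [hfac, hip]
      field_simp
      push_cast
      ring
  have hsum := HasDerivWithinAt.fun_sum hterm
  rw [Finset.sum_range_sub w] at hsum
  have hcterm : HasDerivAt (fun y : ℝ => c * (a-y)^(m+2) / ((m+2)! : ℝ))
      (c * ((m+2:ℕ) * (a-x)^(m+2-1) * (0-1)) / ((m+2)! : ℝ)) x :=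
    ((((hasDerivAt_const x a).sub (hasDerivAt_id x)).pow (m+2)).const_mul c).div_const _
  have htotal := ((hasDerivWithinAt_const x s (f a)).fun_sub hsum).fun_add hcterm.hasDerivWithinAt
  refine htotal.congr_deriv (Eq.symm ?_)
  rw [hw]
  simp only [Nat.add_sub_cancel]
  push_cast
  ring

private lemma hHb_aux (a b fa S Tb Ta : ℝ) (m : ℕ) (hba : b - a ≠ 0) :
    fa - (S + Tb * (a-b)^(m+1) / ((m+1)! : ℝ)) - (Tb - Ta) / (b-a) * (a-b)^(m+2) / ((m+2)! : ℝ)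
      = fa - S + (Tb - Ta) / (b-a) * ((m:ℝ)+1) * (a-b)^(m+2) / ((m+2)! : ℝ)
        - (b-a)^(m+1) * ((-1:ℝ)^(m+1) * Ta / ((m+1)! : ℝ)) := by
  have e1 : (a-b)^(m+1) = (-1:ℝ)^(m+1) * (b-a)^(m+1) := by
    rw [← neg_sub b a, neg_pow]
  have e2 : (a-b)^(m+2) = (a-b) * ((-1:ℝ)^(m+1) * (b-a)^(m+1)) := by
    rw [← e1, ← pow_succ']
  have hfac2 : ((m+2)! : ℝ) = (m+2) * ((m+1)! : ℝ) := by
    rw [show m+2 = (m+1)+1 from rfl, Nat.factorial_succ]; push_cast; ring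
  have hfne : ((m+1)! : ℝ) ≠ 0 := Nat.cast_ne_zero.mpr (m+1).factorial_ne_zero
  have hm2 : ((m:ℝ)+2) ≠ 0 := by positivity
  rw [e1, e2, hfac2]
  field_simp
  ring

private lemma hGb_aux (q w ba : ℝ) (m : ℕ) (hba : ba ≠ 0) :
    -((m:ℝ)+1) * (q - ba^(m+1) * w) / ba^(m+2)
      = -(((m:ℝ)+1)/ba) * (q / ba^(m+1) - w) := by
  have h1 : ba^(m+1) ≠ 0 := pow_ne_zero _ hba
  have h2 : ba^(m+2) ≠ 0 := pow_ne_zero _ hba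
  rw [div_eq_iff h2]
  field_simp
  ring

/-- **Pawlikowska's theorem without boundary condition.** Let `f` be `n`-times
differentiable at every point of `[a,b]` (one-sidedly at the endpoints), where the
iterated derivatives are taken within `[a,b]`. Then there exists `η ∈ (a,b)` with
`f(a) = T_n(f,η)(a) + ((a-η)^{n+1}/(n+1)!)·(f⁽ⁿ⁾(b) - f⁽ⁿ⁾(a))/(b-a)`, where
`T_n(f,η)(a) = ∑_{i=0}^{n} (f⁽ⁱ⁾(η)/i!)·(a-η)^i` is the `n`-th Taylor polynomial. -/
theorem pawlikowska_theorem_without_boundary (f : ℝ → ℝ) (a b : ℝ) (n : ℕ) (hn : 1 ≤ n)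
    (hab : a < b)
    (hf : ∀ i < n, ∀ x ∈ Set.Icc a b,
      DifferentiableWithinAt ℝ (iteratedDerivWithin i f (Set.Icc a b)) (Set.Icc a b) x) :
    ∃ η ∈ Set.Ioo a b, f a =
      (∑ i ∈ Finset.range (n + 1),
        iteratedDerivWithin i f (Set.Icc a b) η / (Nat.factorial i) * (a - η) ^ i) +
      (a - η) ^ (n + 1) / (Nat.factorial (n + 1)) *
        ((iteratedDerivWithin n f (Set.Icc a b) b - iteratedDerivWithin n f (Set.Icc a b) a)
          / (b - a)) := by
  obtain ⟨m, rfl⟩ : ∃ m, n = m + 1 := ⟨n - 1, by omega⟩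
  have ha : a ∈ Set.Icc a b := Set.left_mem_Icc.mpr hab.le
  have hb : b ∈ Set.Icc a b := Set.right_mem_Icc.mpr hab.le
  have hba : b - a ≠ 0 := sub_ne_zero.mpr hab.ne'
  have hbna : b ≠ a := hab.ne'
  set C0 : ℝ := (iteratedDerivWithin (m+1) f (Set.Icc a b) b
      - iteratedDerivWithin (m+1) f (Set.Icc a b) a) / (b - a) with hC0
  set c : ℝ := C0 * (m+1) with hc
  set N : ℝ → ℝ := fun y => f a - (∑ i ∈ Finset.range (m+1),
      iteratedDerivWithin i f (Set.Icc a b) y * (a - y)^i / (i ! : ℝ))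
      + c * (a - y)^(m+2) / ((m+2)! : ℝ) with hN
  set N' : ℝ → ℝ := fun x =>
      -(iteratedDerivWithin (m+1) f (Set.Icc a b) x * (a - x)^m * (m+1) / ((m+1)! : ℝ))
      - c * (m+2) * (a - x)^(m+1) / ((m+2)! : ℝ) with hN'
  set H : ℝ → ℝ := fun x => f a - (∑ i ∈ Finset.range (m+2),
      iteratedDerivWithin i f (Set.Icc a b) x * (a - x)^i / (i ! : ℝ))
      - C0 * (a - x)^(m+2) / ((m+2)! : ℝ) with hH
  set v : ℝ := (-1:ℝ)^(m+1) * iteratedDerivWithin (m+1) f (Set.Icc a b) a / ((m+1)! : ℝ)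
    with hv
  set g : ℝ → ℝ := fun x => if x = a then v else N x / (x - a)^(m+1) with hg
  set G : ℝ → ℝ := fun x => (N' x * (x - a) - (m+1) * N x) / (x - a)^(m+2) with hG
  have hNderiv : ∀ x ∈ Set.Icc a b, HasDerivWithinAt N (N' x) (Set.Icc a b) x :=
    hasDerivN hab f m hf c
  -- key algebraic identity
  have hNH : ∀ x : ℝ, N' x * (x - a) - (m+1) * N x = -(m+1) * H x := by
    intro x
    rw [hN', hN, hH]
    simp only []
    rw [Finset.sum_range_succ
      (fun i => iteratedDerivWithin i f (Set.Icc a b) x * (a - x)^i / (i ! : ℝ)) (m+1)]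
    rw [hc]
    ring
  -- derivative of g away from a
  have hgderiv : ∀ x ∈ Set.Icc a b, x ≠ a → HasDerivWithinAt g (G x) (Set.Icc a b) x := by
    intro x hx hxa
    have hxa' : x - a ≠ 0 := sub_ne_zero.mpr hxa
    have hden : HasDerivWithinAt (fun y : ℝ => (y - a)^(m+1))
        (((m+1) : ℕ) * (x-a)^m * 1) (Set.Icc a b) x := by
      have := (((hasDerivAt_id x).sub_const a).fun_pow (m+1)).hasDerivWithinAt
        (s := Set.Icc a b)
      simpa using this
    have hq := (hNderiv x hx).div hden (pow_ne_zero _ hxa')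
    have hq' : HasDerivWithinAt (fun y => N y / (y - a)^(m+1)) (G x) (Set.Icc a b) x := by
      refine hq.congr_deriv (Eq.symm ?_)
      rw [hG]
      simp only []
      have h1 : (x - a)^(m+2) ≠ 0 := pow_ne_zero _ hxa'
      have h2 : ((x - a)^(m+1))^2 ≠ 0 := pow_ne_zero _ (pow_ne_zero _ hxa')
      rw [div_eq_div_iff h1 h2]
      generalize N' x = p
      generalize N x = q
      push_cast
      ring
    apply hq'.congr_of_eventuallyEq _ (by rw [hg]; simp only [if_neg hxa])
    have hmem : {y : ℝ | y ≠ a} ∈ 𝓝[Set.Icc a b] x :=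
      nhdsWithin_le_nhds (isOpen_compl_singleton.mem_nhds hxa)
    filter_upwards [hmem] with y hy
    rw [hg]; simp only [if_neg hy]
  -- continuity of g on [a,b]
  have hconta : ContinuousWithinAt g (Set.Icc a b) a := by
    rw [← continuousWithinAt_diff_self]
    have hA := varying hab f (m+1) (by omega) hf
    have T1 := hA.tendsto_div_nhds_zero.mono_left
      (nhdsWithin_mono a (Set.diff_subset (s := Set.Icc a b) (t := {a})))
    have hcontf : Continuous (fun y : ℝ => c * (a - y) * (-1:ℝ)^(m+1) / ((m+2)! : ℝ)) := by
      fun_prop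
    have T3 : Filter.Tendsto (fun y : ℝ => c * (a - y) * (-1:ℝ)^(m+1) / ((m+2)! : ℝ))
        (𝓝[Set.Icc a b \ {a}] a) (𝓝 0) := by
      have h0 := hcontf.tendsto a
      have : c * (a - a) * (-1:ℝ)^(m+1) / ((m+2)! : ℝ) = 0 := by simp
      rw [this] at h0
      exact h0.mono_left nhdsWithin_le_nhds
    have Tv := T1.add ((tendsto_const_nhds (x := v)
        (f := 𝓝[Set.Icc a b \ {a}] a)).add T3)
    rw [add_zero, zero_add] at Tv
    have hgav : g a = v := by rw [hg]; simp
    unfold ContinuousWithinAt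
    rw [hgav]
    apply Tv.congr'
    filter_upwards [self_mem_nhdsWithin] with y hy
    have hya : y ≠ a := fun h => hy.2 h
    have hyne : (y : ℝ) - a ≠ 0 := sub_ne_zero.mpr hya
    have hp : ((y : ℝ) - a)^(m+1) ≠ 0 := pow_ne_zero _ hyne
    rw [hg]
    simp only [if_neg hya]
    rw [eq_div_iff hp, add_mul, div_mul_cancel₀ _ hp]
    have e1 : (a-y)^(m+1) = (-1:ℝ)^(m+1) * (y-a)^(m+1) := by
      rw [← neg_sub y a, neg_pow]
    have e2 : (a-y)^(m+2) = (a-y) * ((-1:ℝ)^(m+1) * (y-a)^(m+1)) := by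
      rw [← e1, ← pow_succ']
    rw [hN, hv]
    simp only []
    rw [e1, e2]
    ring
  have hcont : ContinuousOn g (Set.Icc a b) := by
    intro x hx
    by_cases hxa : x = a
    · subst hxa; exact hconta
    · exact (hgderiv x hx hxa).continuousWithinAt
  -- the boundary derivative identity
  have hHb : H b = N b - (b-a)^(m+1) * v := by
    rw [hH, hN, hv]
    simp only []
    rw [Finset.sum_range_succ
      (fun i => iteratedDerivWithin i f (Set.Icc a b) b * (a - b)^i / (i ! : ℝ)) (m+1)]
    rw [hc, hC0]
    exact hHb_aux a b (f a) _ _ _ m hba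
  set K : ℝ := ((m:ℝ)+1)/(b-a) with hK
  have hKpos : 0 < K := div_pos (by positivity) (sub_pos.mpr hab)
  have hGb : G b = -K * (g b - v) := by
    have hgb : g b = N b / (b-a)^(m+1) := by rw [hg]; simp only [if_neg hbna]
    rw [hG]
    simp only []
    rw [hNH b, hHb, hgb, hK]
    exact hGb_aux (N b) v (b-a) m hba
  -- Flett argument
  have hint : ∀ x ∈ Set.Ioo a b, HasDerivAt g (G x) x := fun x hx =>
    (hgderiv x (Set.Ioo_subset_Icc_self hx) hx.1.ne').hasDerivAt
      (Icc_mem_nhds hx.1 hx.2)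
  have hgav : g a = v := by rw [hg]; simp
  obtain ⟨η, hη, hGη⟩ := flett_zero hab g G hcont hgav hint
    (hgderiv b hb hbna) hKpos hGb
  have hηa : (η : ℝ) - a ≠ 0 := sub_ne_zero.mpr hη.1.ne'
  rw [hG] at hGη
  simp only [] at hGη
  have hnum : N' η * (η - a) - ((m:ℝ)+1) * N η = 0 := by
    rcases div_eq_zero_iff.mp hGη with h | h
    · exact h
    · exact absurd h (pow_ne_zero _ hηa)
  have hHη : H η = 0 := by
    have h := hNH η
    rw [hnum] at h
    rcases mul_eq_zero.mp h.symm with h' | h'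
    · exact absurd h' (neg_ne_zero.mpr (by positivity))
    · exact h'
  refine ⟨η, hη, ?_⟩
  rw [hH] at hHη
  simp only [] at hHη
  have hsum : ∑ i ∈ Finset.range (m+1+1),
      iteratedDerivWithin i f (Set.Icc a b) η / (i ! : ℝ) * (a-η)^i
      = ∑ i ∈ Finset.range (m+2),
      iteratedDerivWithin i f (Set.Icc a b) η * (a-η)^i / (i ! : ℝ) := by
    apply Finset.sum_congr rfl
    intro i _
    ring
  rw [hsum]
  rw [show m+1+1 = m+2 from rfl]
  linear_combination hHη
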